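/- Let 1 ≤ r < n, write x = (x₁, x₀) ∈ ℝʳ × ℝ^{n−r}, let B be an n×n real symmetric matrix that is either positive semidefinite or negative semidefinite (i.e. not indefinite), b ∈ ℝⁿ, k ∈ ℝ, and suppose X := {x : xᵀBx + 2bᵀx − k = 0} is nonempty. If inf{‖x₁‖² : x ∈ X} = 0, then there exists x ∈ X with x₁ = 0_r; that is, a hyperbolic (indefinite) quadratic constraint is necessary for the infimum 0 to fail to be attained. -/

import Mathlib

open Matrix Filter

namespace Stmt11Aux

variable {r m : ℕ}

/-- Embed the second block of coordinates. -/
def e0 (v : Fin m → ℝ) : Fin r ⊕ Fin m → ℝ := Sum.elim 0 v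

/-- Embed the first block of coordinates. -/
def e1 (u : Fin r → ℝ) : Fin r ⊕ Fin m → ℝ := Sum.elim u 0

lemma e_split (x : Fin r ⊕ Fin m → ℝ) :
    x = e1 (x ∘ Sum.inl) + e0 (x ∘ Sum.inr) := by
  funext i; cases i <;> simp [e1, e0]

lemma e0_add (v w : Fin m → ℝ) : (e0 (v + w) : Fin r ⊕ Fin m → ℝ) = e0 v + e0 w := by
  funext i; cases i <;> simp [e0]

lemma e0_smul (t : ℝ) (v : Fin m → ℝ) : (e0 (t • v) : Fin r ⊕ Fin m → ℝ) = t • e0 v := by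
  funext i; cases i <;> simp [e0]

lemma e0_dot (w : Fin m → ℝ) (z : Fin r ⊕ Fin m → ℝ) :
    e0 w ⬝ᵥ z = w ⬝ᵥ fun i => z (Sum.inr i) := by
  simp [dotProduct, e0, Fintype.sum_sum_type]

lemma e1_dot (u : Fin r → ℝ) (z : Fin r ⊕ Fin m → ℝ) :
    e1 u ⬝ᵥ z = u ⬝ᵥ fun i => z (Sum.inl i) := by
  simp [dotProduct, e1, Fintype.sum_sum_type]

lemma e0_self_dot (w : Fin m → ℝ) : (e0 w : Fin r ⊕ Fin m → ℝ) ⬝ᵥ e0 w = w ⬝ᵥ w := by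
  rw [e0_dot]; rfl

lemma e1_self_dot (u : Fin r → ℝ) : (e1 u : Fin r ⊕ Fin m → ℝ) ⬝ᵥ e1 u = u ⬝ᵥ u := by
  rw [e1_dot]; rfl

/-- quadratic bound: from `G² ≤ pG + q` deduce `G ≤ p + √q`. -/
lemma quad_bound {p q G : ℝ} (hp : 0 ≤ p) (hq : 0 ≤ q) (h : G ^ 2 ≤ p * G + q) :
    G ≤ p + Real.sqrt q := by
  by_contra hcon
  push_neg at hcon
  have h0 : 0 ≤ Real.sqrt q := Real.sqrt_nonneg q
  have h1 : Real.sqrt q ≤ G := by linarith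
  nlinarith [Real.sq_sqrt hq]

/-- if a quadratic with nonnegative leading coefficient is everywhere negative -/
lemma quad_neg {A Bc C : ℝ} (h : ∀ t : ℝ, A * t ^ 2 + Bc * t + C < 0) (hA : 0 ≤ A) :
    A = 0 ∧ Bc = 0 ∧ C < 0 := by
  have hC : C < 0 := by have := h 0; linarith
  have hA0 : A = 0 := by
    rcases eq_or_lt_of_le hA with h' | h'
    · exact h'.symm
    · exfalso
      set t := max 1 ((|Bc| + |C| + 1) / A) with ht
      have ht1 : 1 ≤ t := le_max_left _ _
      have ht2 : (|Bc| + |C| + 1) / A ≤ t := le_max_right _ _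
      have htA : |Bc| + |C| + 1 ≤ A * t := by
        rw [div_le_iff₀ h'] at ht2; linarith [ht2]
      have hBc : -|Bc| ≤ Bc := neg_abs_le Bc
      have hCc : -|C| ≤ C := neg_abs_le C
      have := h t
      nlinarith [mul_le_mul_of_nonneg_right htA (by linarith : (0:ℝ) ≤ t),
        mul_le_mul_of_nonneg_right hBc (by linarith : (0:ℝ) ≤ t)]
  refine ⟨hA0, ?_, hC⟩
  by_contra hBc
  have := h ((1 - C) / Bc)
  rw [hA0] at this
  field_simp at this
  have hb2 : 0 < Bc ^ 2 := lt_of_le_of_ne (sq_nonneg Bc) (Ne.symm (pow_ne_zero 2 hBc))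
  rw [div_lt_iff₀ hb2, zero_mul] at this
  nlinarith

lemma term_bound (a xi xj S : ℝ) (hi : xi ^ 2 ≤ S) (hj : xj ^ 2 ≤ S) :
    xi * (a * xj) ≤ |a| * S := by
  have h1 : xi * (a * xj) ≤ |a| * |xi * xj| := by
    calc xi * (a * xj) = a * (xi * xj) := by ring
    _ ≤ |a * (xi * xj)| := le_abs_self _
    _ = |a| * |xi * xj| := abs_mul _ _
  have h2 : |xi * xj| ≤ S := by
    rw [abs_mul]
    nlinarith [sq_abs xi, sq_abs xj, sq_nonneg (|xi| - |xj|), abs_nonneg xi, abs_nonneg xj]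
  calc xi * (a * xj) ≤ |a| * |xi * xj| := h1
  _ ≤ |a| * S := mul_le_mul_of_nonneg_left h2 (abs_nonneg a)

variable {n : Type*} [Fintype n]

lemma sq_le_dot (x : n → ℝ) (i : n) : x i ^ 2 ≤ x ⬝ᵥ x := by
  have h : x i ^ 2 = x i * x i := sq (x i)
  rw [h]
  exact Finset.single_le_sum (f := fun j => x j * x j)
    (fun j _ => mul_self_nonneg _) (Finset.mem_univ i)

lemma dot_self_nonneg (x : n → ℝ) : 0 ≤ x ⬝ᵥ x :=
  Finset.sum_nonneg fun j _ => mul_self_nonneg _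

lemma Q_bound (B : Matrix n n ℝ) (x : n → ℝ) :
    x ⬝ᵥ B.mulVec x ≤ (∑ i, ∑ j, |B i j|) * (x ⬝ᵥ x) := by
  rw [dotProduct, Finset.sum_mul]
  apply Finset.sum_le_sum
  intro i _
  rw [mulVec, dotProduct, Finset.mul_sum, Finset.sum_mul]
  apply Finset.sum_le_sum
  intro j _
  exact term_bound (B i j) (x i) (x j) _ (sq_le_dot x i) (sq_le_dot x j)

lemma K_nonneg (B : Matrix n n ℝ) : 0 ≤ ∑ i, ∑ j, |B i j| :=
  Finset.sum_nonneg fun i _ => Finset.sum_nonneg fun j _ => abs_nonneg _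

lemma bsym {B : Matrix n n ℝ} (hB : B.IsHermitian) (x y : n → ℝ) :
    x ⬝ᵥ B.mulVec y = y ⬝ᵥ B.mulVec x := by
  have ht : Bᵀ = B := by
    ext i j
    simpa using congrFun (congrFun hB.eq i) j
  rw [dotProduct_mulVec, dotProduct_comm, ← mulVec_transpose, ht]

lemma q_expand {B : Matrix n n ℝ} (hB : B.IsHermitian) (b : n → ℝ) (k : ℝ)
    (x y : n → ℝ) (t : ℝ) :
    (x + t • y) ⬝ᵥ B.mulVec (x + t • y) + 2 * (b ⬝ᵥ (x + t • y)) - k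
      = (y ⬝ᵥ B.mulVec y) * t ^ 2 + (2 * (y ⬝ᵥ B.mulVec x) + 2 * (b ⬝ᵥ y)) * t
        + (x ⬝ᵥ B.mulVec x + 2 * (b ⬝ᵥ x) - k) := by
  have h1 := bsym hB x y
  simp only [mulVec_add, mulVec_smul, dotProduct_add, add_dotProduct,
    dotProduct_smul, smul_dotProduct, smul_eq_mul]
  rw [h1]
  ring

lemma Q_expand {B : Matrix n n ℝ} (hB : B.IsHermitian) (x y : n → ℝ) (t : ℝ) :
    (x + t • y) ⬝ᵥ B.mulVec (x + t • y)
      = (y ⬝ᵥ B.mulVec y) * t ^ 2 + (2 * (y ⬝ᵥ B.mulVec x)) * t + x ⬝ᵥ B.mulVec x := by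
  have := q_expand hB 0 0 x y t
  simpa using this

/-- key auxiliary result: the positive semidefinite case. -/
noncomputable def Tmap {r m : ℕ} (B : Matrix (Fin r ⊕ Fin m) (Fin r ⊕ Fin m) ℝ) :
    (Fin m → ℝ) →ₗ[ℝ] (Fin m → ℝ) where
  toFun := fun vv i => (B *ᵥ e0 vv) (Sum.inr i)
  map_add' := by
    intro x y
    funext i
    show (B *ᵥ e0 (x + y)) (Sum.inr i) = (B *ᵥ e0 x) (Sum.inr i) + (B *ᵥ e0 y) (Sum.inr i)
    rw [e0_add, mulVec_add]
    rfl
  map_smul' := by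
    intro t x
    funext i
    show (B *ᵥ e0 (t • x)) (Sum.inr i) = (t • fun j => (B *ᵥ e0 x) (Sum.inr j)) i
    rw [e0_smul, mulVec_smul]
    rfl

lemma Tmap_apply {r m : ℕ} (B : Matrix (Fin r ⊕ Fin m) (Fin r ⊕ Fin m) ℝ)
    (vv : Fin m → ℝ) (i : Fin m) : Tmap B vv i = (B *ᵥ e0 vv) (Sum.inr i) := rfl

set_option maxHeartbeats 1600000 in
theorem key {r m : ℕ}
    (B : Matrix (Fin r ⊕ Fin m) (Fin r ⊕ Fin m) ℝ)
    (hB : B.PosSemidef)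
    (b : Fin r ⊕ Fin m → ℝ) (k : ℝ)
    (hX : {x : Fin r ⊕ Fin m → ℝ | x ⬝ᵥ B.mulVec x + 2 * (b ⬝ᵥ x) - k = 0}.Nonempty)
    (hinf : sInf ((fun x => (x ∘ Sum.inl) ⬝ᵥ (x ∘ Sum.inl)) ''
        {x : Fin r ⊕ Fin m → ℝ | x ⬝ᵥ B.mulVec x + 2 * (b ⬝ᵥ x) - k = 0}) = 0) :
    ∃ x ∈ {x : Fin r ⊕ Fin m → ℝ | x ⬝ᵥ B.mulVec x + 2 * (b ⬝ᵥ x) - k = 0},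
      x ∘ Sum.inl = 0 := by
  have hQ0 : ∀ x : Fin r ⊕ Fin m → ℝ, 0 ≤ x ⬝ᵥ B.mulVec x := fun x => by simpa using hB.dotProduct_mulVec_nonneg x
  set X := {x : Fin r ⊕ Fin m → ℝ | x ⬝ᵥ B.mulVec x + 2 * (b ⬝ᵥ x) - k = 0} with hXdef
  set g : (Fin m → ℝ) → ℝ :=
    fun v => (e0 v) ⬝ᵥ B.mulVec (e0 v) + 2 * (b ⬝ᵥ e0 v) - k with hgdef
  -- the trivial case: g has a zero
  by_cases hz : ∃ v, g v = 0
  · obtain ⟨v, hv⟩ := hz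
    exact ⟨e0 v, hv, funext fun i => rfl⟩
  push_neg at hz
  -- g has constant sign
  have hsign : (∀ v, 0 < g v) ∨ (∀ v, g v < 0) := by
    by_contra hcon
    push_neg at hcon
    obtain ⟨⟨va, hva⟩, ⟨vb, hvb⟩⟩ := hcon
    have hva' : g va < 0 := lt_of_le_of_ne hva (hz va)
    have hvb' : 0 < g vb := lt_of_le_of_ne hvb (Ne.symm (hz vb))
    -- IVT along the segment
    have hf : ∀ t : ℝ, g (va + t • (vb - va))
        = (e0 (vb - va) ⬝ᵥ B.mulVec (e0 (vb - va))) * t ^ 2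
          + (2 * (e0 (vb - va) ⬝ᵥ B.mulVec (e0 va)) + 2 * (b ⬝ᵥ e0 (vb - va))) * t + g va := by
      intro t
      rw [hgdef]
      simp only
      rw [e0_add, e0_smul]
      exact q_expand hB.1 b k (e0 va) (e0 (vb - va)) t
    have hcont : Continuous fun t : ℝ => g (va + t • (vb - va)) := by
      have : (fun t : ℝ => g (va + t • (vb - va)))
          = fun t : ℝ => (e0 (vb - va) ⬝ᵥ B.mulVec (e0 (vb - va))) * t ^ 2
          + (2 * (e0 (vb - va) ⬝ᵥ B.mulVec (e0 va)) + 2 * (b ⬝ᵥ e0 (vb - va))) * t + g va :=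
        funext hf
      rw [this]; continuity
    have h01 : (0:ℝ) ≤ 1 := zero_le_one
    have := intermediate_value_Icc h01 hcont.continuousOn
    have hmem : (0:ℝ) ∈ Set.Icc (g (va + (0:ℝ) • (vb - va))) (g (va + (1:ℝ) • (vb - va))) := by
      simp only [zero_smul, add_zero, one_smul]
      constructor
      · simpa using hva'.le
      · simpa using hvb'.le
    obtain ⟨t, _, ht⟩ := this hmem
    exact hz _ ht
  -- the minimizing sequence
  have hseq : ∀ nn : ℕ, ∃ x, x ∈ X ∧ (x ∘ Sum.inl) ⬝ᵥ (x ∘ Sum.inl) < 1 / (nn + 1) := by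
    intro nn
    by_contra hcon
    push_neg at hcon
    have hpos : (0:ℝ) < 1 / (nn + 1) := by positivity
    have hle : (1:ℝ) / (nn + 1) ≤ sInf ((fun x => (x ∘ Sum.inl) ⬝ᵥ (x ∘ Sum.inl)) '' X) := by
      apply le_csInf (hX.image _)
      rintro y ⟨x, hx, rfl⟩
      exact hcon x hx
    rw [hinf] at hle
    linarith
  choose seq hseqmem hseqlt using hseq
  set u : ℕ → Fin r → ℝ := fun nn => seq nn ∘ Sum.inl with hudef
  set v : ℕ → Fin m → ℝ := fun nn => seq nn ∘ Sum.inr with hvdef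
  set s : ℕ → ℝ := fun nn => u nn ⬝ᵥ u nn with hsdef
  set a : ℕ → ℝ := fun nn => e1 (u nn) ⬝ᵥ B.mulVec (e1 (u nn)) with hadef
  set β : ℕ → ℝ := fun nn => b ⬝ᵥ e1 (u nn) with hβdef
  set W : ℕ → ℝ := fun nn => e0 (v nn) ⬝ᵥ B.mulVec (e1 (u nn)) with hWdef
  set G : ℕ → ℝ := fun nn => g (v nn) with hGdef
  set c : ℕ → ℝ := fun nn => e0 (v nn) ⬝ᵥ B.mulVec (e0 (v nn)) with hcdef
  have hfeas : ∀ nn, a nn + 2 * W nn + 2 * β nn + G nn = 0 := by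
    intro nn
    have hx := hseqmem nn
    rw [hXdef, Set.mem_setOf_eq] at hx
    rw [e_split (seq nn)] at hx
    have hq := q_expand hB.1 b k (e1 (seq nn ∘ Sum.inl)) (e0 (seq nn ∘ Sum.inr)) 1
    rw [one_smul] at hq
    rw [hq] at hx
    simp only [hadef, hβdef, hWdef, hGdef, hgdef, hcdef, hudef, hvdef]
    linarith [hx]
  have hs_nonneg : ∀ nn, 0 ≤ s nn := fun nn => dot_self_nonneg _
  have hs : Tendsto s atTop (nhds 0) := by
    refine tendsto_of_tendsto_of_tendsto_of_le_of_le tendsto_const_nhds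
      tendsto_one_div_add_atTop_nhds_zero_nat hs_nonneg ?_
    exact fun nn => (hseqlt nn).le
  set K : ℝ := ∑ i, ∑ j, |B i j| with hKdef
  have hK0 : 0 ≤ K := K_nonneg B
  have haK : ∀ nn, a nn ≤ K * s nn := by
    intro nn
    have h := Q_bound B (e1 (u nn))
    rwa [e1_self_dot] at h
  have ha0 : ∀ nn, 0 ≤ a nn := fun nn => hQ0 _
  have ha : Tendsto a atTop (nhds 0) := by
    have hKs : Tendsto (fun nn => K * s nn) atTop (nhds 0) := by
      simpa using hs.const_mul K
    exact tendsto_of_tendsto_of_tendsto_of_le_of_le tendsto_const_nhds hKs ha0 haK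
  set Lb : ℝ := (fun i => b (Sum.inl i)) ⬝ᵥ (fun i => b (Sum.inl i)) with hLbdef
  have hβsq : ∀ nn, (β nn)^2 ≤ Lb * s nn := by
    intro nn
    have h1 : β nn = u nn ⬝ᵥ fun i => b (Sum.inl i) := by
      rw [hβdef]; simp only; rw [dotProduct_comm, e1_dot]
    have hcs := Finset.sum_mul_sq_le_sq_mul_sq Finset.univ (u nn) (fun i => b (Sum.inl i))
    have e2 : ∑ i, u nn i ^ 2 = ∑ i, u nn i * u nn i := by simp [pow_two]
    have e3 : ∑ i, (b (Sum.inl i)) ^ 2 = ∑ i, b (Sum.inl i) * b (Sum.inl i) := by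
      simp [pow_two]
    rw [h1]
    simp only [hsdef, hLbdef, dotProduct]
    calc (∑ i, u nn i * b (Sum.inl i)) ^ 2
        ≤ (∑ i, u nn i ^ 2) * (∑ i, (b (Sum.inl i)) ^ 2) := hcs
      _ = (∑ i, b (Sum.inl i) * b (Sum.inl i)) * (∑ i, u nn i * u nn i) := by
          rw [e2, e3]; ring
  have hβabs : ∀ nn, |β nn| ≤ Real.sqrt (Lb * s nn) := by
    intro nn
    calc |β nn| = Real.sqrt ((β nn) ^ 2) := (Real.sqrt_sq_eq_abs _).symm
      _ ≤ _ := Real.sqrt_le_sqrt (hβsq nn)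
  have hsqrtLb : Tendsto (fun nn => Real.sqrt (Lb * s nn)) atTop (nhds 0) := by
    have h2 : Tendsto (fun nn => Lb * s nn) atTop (nhds 0) := by simpa using hs.const_mul Lb
    have h3 := (Real.continuous_sqrt.tendsto 0).comp h2
    simpa [Function.comp_def] using h3
  have hβ : Tendsto β atTop (nhds 0) := by
    have hneg : Tendsto (fun nn => -Real.sqrt (Lb * s nn)) atTop (nhds 0) := by
      simpa using hsqrtLb.neg
    exact tendsto_of_tendsto_of_tendsto_of_le_of_le hneg hsqrtLb
      (fun nn => neg_le_of_abs_le (hβabs nn)) (fun nn => le_of_abs_le (hβabs nn))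
  rcases hsign with hpos | hneg
  · -- positive case: g > 0 everywhere
    have hG0 : ∀ nn, 0 < G nn := fun nn => hpos (v nn)
    have hW2 : ∀ nn, (W nn) ^ 2 ≤ a nn * c nn := by
      intro nn
      have hQt : ∀ t : ℝ, 0 ≤ a nn * (t * t) + (2 * W nn) * t + c nn := by
        intro t
        have hE := Q_expand hB.1 (e0 (v nn)) (e1 (u nn)) t
        have hcr : e1 (u nn) ⬝ᵥ B.mulVec (e0 (v nn)) = W nn := by
          rw [hWdef]; simp only; exact bsym hB.1 _ _
        rw [hcr] at hE
        have h0 := hQ0 (e0 (v nn) + t • e1 (u nn))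
        rw [hE] at h0
        calc (0:ℝ) ≤ (e1 (u nn) ⬝ᵥ B.mulVec (e1 (u nn))) * t ^ 2 + 2 * W nn * t
            + e0 (v nn) ⬝ᵥ B.mulVec (e0 (v nn)) := h0
          _ = a nn * (t * t) + (2 * W nn) * t + c nn := by
              rw [hadef, hcdef]; simp only; ring
      have hd := discrim_le_zero hQt
      rw [discrim] at hd
      nlinarith [hd]
    have hc0 : ∀ nn, 0 ≤ c nn := fun nn => hQ0 _
    have hcG : ∀ nn, c nn < 2 * G nn - 2 * k := by
      intro nn
      have h1 := hpos ((1/2 : ℝ) • v nn)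
      rw [hgdef] at h1
      simp only at h1
      rw [e0_smul] at h1
      have h2 := q_expand hB.1 b k 0 (e0 (v nn)) (1/2)
      rw [zero_add] at h2
      rw [h2] at h1
      simp only [mulVec_zero, dotProduct_zero, zero_dotProduct, mul_zero, add_zero,
        zero_add, zero_mul, zero_sub] at h1
      simp only [hcdef, hGdef, hgdef]
      linarith [h1]
    have hGsq : ∀ nn, (G nn)^2 ≤ (6 * a nn + 4 * |β nn|) * G nn + 8 * a nn * |k| := by
      intro nn
      have h1 := hfeas nn
      have h2 := hW2 nn
      have h3 := hcG nn
      have h4 := ha0 nn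
      have h5 := hG0 nn
      have h6 : -|β nn| ≤ β nn := neg_abs_le _
      have hsum : G nn + a nn + 2 * β nn = -(2 * W nn) := by linarith
      have hsq : (G nn + a nn + 2 * β nn)^2 = 4 * (W nn)^2 := by rw [hsum]; ring
      have h4ac : a nn * c nn ≤ a nn * (2 * G nn - 2 * k) := mul_le_mul_of_nonneg_left h3.le h4
      have hknk : a nn * (-k) ≤ a nn * |k| := mul_le_mul_of_nonneg_left (neg_le_abs k) h4
      have hβG : -(|β nn| * G nn) ≤ β nn * G nn :=
        le_trans (by ring_nf; rfl) (mul_le_mul_of_nonneg_right h6 h5.le)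
      nlinarith [hsq, h2, h4ac, hknk, hβG, sq_nonneg (a nn + 2 * β nn)]
    have hGle : ∀ nn, G nn ≤ (6 * a nn + 4 * |β nn|) + Real.sqrt (8 * a nn * |k|) := by
      intro nn
      refine quad_bound ?_ ?_ (hGsq nn)
      · have := ha0 nn; have := abs_nonneg (β nn); linarith
      · have := ha0 nn; have := abs_nonneg k; positivity
    have hUb : Tendsto (fun nn => (6 * a nn + 4 * |β nn|) + Real.sqrt (8 * a nn * |k|))
        atTop (nhds 0) := by
      have t1 : Tendsto (fun nn => 6 * a nn) atTop (nhds 0) := by simpa using ha.const_mul 6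
      have t2 : Tendsto (fun nn => |β nn|) atTop (nhds 0) := by simpa using hβ.abs
      have t3 : Tendsto (fun nn => 4 * |β nn|) atTop (nhds 0) := by simpa using t2.const_mul 4
      have t4 : Tendsto (fun nn => 8 * a nn * |k|) atTop (nhds 0) := by
        have := (ha.const_mul 8).mul_const |k|
        simpa using this
      have t5 : Tendsto (fun nn => Real.sqrt (8 * a nn * |k|)) atTop (nhds 0) := by
        have h6 := (Real.continuous_sqrt.tendsto 0).comp t4
        rw [Real.sqrt_zero] at h6
        exact h6
      simpa using (t1.add t3).add t5
    have hGt : Tendsto G atTop (nhds 0) :=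
      tendsto_of_tendsto_of_tendsto_of_le_of_le tendsto_const_nhds hUb
        (fun nn => (hG0 nn).le) hGle
    set Φ : (Fin m → ℝ) → (Fin m → ℝ) :=
      fun vv i => B.mulVec (e0 vv) (Sum.inr i) + b (Sum.inr i) with hΦdef
    have hdotΦ : ∀ (vv w : Fin m → ℝ),
        e0 w ⬝ᵥ B.mulVec (e0 vv) + b ⬝ᵥ e0 w = w ⬝ᵥ Φ vv := by
      intro vv w
      rw [e0_dot, dotProduct_comm b, e0_dot, hΦdef]
      simp only [dotProduct]
      rw [← Finset.sum_add_distrib]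
      apply Finset.sum_congr rfl
      intro i _
      ring
    have hkey : ∀ (vv w : Fin m → ℝ),
        (w ⬝ᵥ Φ vv)^2 ≤ (e0 w ⬝ᵥ B.mulVec (e0 w)) * g vv := by
      intro vv w
      have hq : ∀ t : ℝ,
          0 ≤ (e0 w ⬝ᵥ B.mulVec (e0 w)) * (t * t) + (2 * (w ⬝ᵥ Φ vv)) * t + g vv := by
        intro t
        have h1 := (hpos (vv + t • w)).le
        have hgv : g (vv + t • w)
            = (e0 vv + t • e0 w) ⬝ᵥ B.mulVec (e0 vv + t • e0 w)
              + 2 * (b ⬝ᵥ (e0 vv + t • e0 w)) - k := by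
          rw [hgdef]; simp only; rw [e0_add, e0_smul]
        rw [hgv, q_expand hB.1 b k (e0 vv) (e0 w) t] at h1
        have h3 := hdotΦ vv w
        have hgv2 : g vv = e0 vv ⬝ᵥ B.mulVec (e0 vv) + 2 * (b ⬝ᵥ e0 vv) - k := by
          rw [hgdef]
        have hco : 2 * (e0 w ⬝ᵥ B.mulVec (e0 vv)) + 2 * (b ⬝ᵥ e0 w) = 2 * (w ⬝ᵥ Φ vv) := by
          linarith [h3]
        rw [hco, ← hgv2] at h1
        have ht2 : t ^ 2 = t * t := pow_two t
        rw [ht2] at h1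
        exact h1
      have hd := discrim_le_zero hq
      rw [discrim] at hd
      nlinarith [hd]
    have hΦ2 : ∀ nn, (Φ (v nn)) ⬝ᵥ (Φ (v nn)) ≤ K * G nn := by
      intro nn
      have h1 := hkey (v nn) (Φ (v nn))
      have h2 : (e0 (Φ (v nn)) ⬝ᵥ B.mulVec (e0 (Φ (v nn))))
          ≤ K * ((Φ (v nn)) ⬝ᵥ (Φ (v nn))) := by
        have := Q_bound B (e0 (Φ (v nn)))
        rwa [e0_self_dot] at this
      have h3 : 0 ≤ (Φ (v nn)) ⬝ᵥ (Φ (v nn)) := dot_self_nonneg _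
      have h4 : 0 < g (v nn) := hpos (v nn)
      have h5 : ((Φ (v nn)) ⬝ᵥ (Φ (v nn)))^2
          ≤ (K * ((Φ (v nn)) ⬝ᵥ (Φ (v nn)))) * g (v nn) :=
        le_trans h1 (mul_le_mul_of_nonneg_right h2 h4.le)
      have hGnn : G nn = g (v nn) := rfl
      rw [hGnn]
      rcases eq_or_lt_of_le h3 with h6 | h6
      · rw [← h6]
        exact mul_nonneg hK0 h4.le
      · nlinarith [h5, h6]
    have hΦc : ∀ i : Fin m, Tendsto (fun nn => Φ (v nn) i) atTop (nhds 0) := by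
      intro i
      have hb2 : ∀ nn, |Φ (v nn) i| ≤ Real.sqrt (K * G nn) := by
        intro nn
        have h1 : (Φ (v nn) i)^2 ≤ K * G nn := le_trans (sq_le_dot (Φ (v nn)) i) (hΦ2 nn)
        calc |Φ (v nn) i| = Real.sqrt ((Φ (v nn) i)^2) := (Real.sqrt_sq_eq_abs _).symm
          _ ≤ _ := Real.sqrt_le_sqrt h1
      have hsq : Tendsto (fun nn => Real.sqrt (K * G nn)) atTop (nhds 0) := by
        have h2 : Tendsto (fun nn => K * G nn) atTop (nhds 0) := by
          simpa using hGt.const_mul K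
        have h3 := (Real.continuous_sqrt.tendsto 0).comp h2
        simpa [Function.comp_def] using h3
      refine tendsto_of_tendsto_of_tendsto_of_le_of_le (by simpa using hsq.neg) hsq
        (fun nn => neg_le_of_abs_le (hb2 nn)) (fun nn => le_of_abs_le (hb2 nn))
    set d' : Fin m → ℝ := fun i => b (Sum.inr i) with hd'def
    have hTΦ : ∀ vv : Fin m → ℝ, ∀ i, Tmap B vv i = Φ vv i - d' i := by
      intro vv i
      rw [Tmap_apply, hΦdef, hd'def]
      ring
    have hTt : Tendsto (fun nn => Tmap B (v nn)) atTop (nhds (-d')) := by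
      rw [tendsto_pi_nhds]
      intro i
      have h1 : (fun nn => Tmap B (v nn) i) = fun nn => Φ (v nn) i - d' i :=
        funext (fun nn => hTΦ (v nn) i)
      rw [h1]
      have := (hΦc i).sub_const (d' i)
      simpa using this
    have hmem : -d' ∈ LinearMap.range (Tmap B) := by
      have hclosed : IsClosed ((LinearMap.range (Tmap B) : Submodule ℝ (Fin m → ℝ)) : Set (Fin m → ℝ)) :=
        Submodule.closed_of_finiteDimensional _
      exact hclosed.mem_of_tendsto hTt (Filter.Eventually.of_forall (fun nn => ⟨v nn, rfl⟩))
    obtain ⟨p, hp⟩ := hmem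
    have hΦp : Φ p = 0 := by
      funext i
      have h1 := hTΦ p i
      rw [hp] at h1
      simp only [Pi.neg_apply] at h1
      have : Φ p i = 0 := by linarith
      simpa using this
    have hmin : ∀ vv, g p ≤ g vv := by
      intro vv
      have h2 := q_expand hB.1 b k (e0 p) (e0 (vv - p)) 1
      rw [one_smul, ← e0_add] at h2
      have hpv : p + (vv - p) = vv := by abel
      rw [hpv] at h2
      have h3 := hdotΦ p (vv - p)
      rw [hΦp] at h3
      have h4 : (vv - p) ⬝ᵥ (0 : Fin m → ℝ) = 0 := dotProduct_zero _
      have h5 := hQ0 (e0 (vv - p))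
      rw [hgdef]
      simp only
      rw [h4] at h3
      linarith [h2, h3, h5]
    have hple : ∀ nn, g p ≤ G nn := fun nn => hmin (v nn)
    have hcontr : g p ≤ 0 := ge_of_tendsto hGt (Filter.Eventually.of_forall hple)
    exact absurd hcontr (not_le.mpr (hpos p))
  · -- negative case: g < 0 everywhere
    have hprop : ∀ w : Fin m → ℝ,
        (e0 w ⬝ᵥ B.mulVec (e0 w) : ℝ) = 0 ∧ 2 * (b ⬝ᵥ e0 w) = 0 ∧ (-k) < 0 := by
      intro w
      have hq : ∀ t : ℝ,
          (e0 w ⬝ᵥ B.mulVec (e0 w)) * t ^ 2 + (2 * (b ⬝ᵥ e0 w)) * t + (-k) < 0 := by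
        intro t
        have h1 := hneg (t • w)
        rw [hgdef] at h1
        simp only at h1
        rw [e0_smul] at h1
        have h2 := q_expand hB.1 b k 0 (e0 w) t
        rw [zero_add] at h2
        rw [h2] at h1
        simp only [mulVec_zero, dotProduct_zero, zero_dotProduct, mul_zero, add_zero,
          zero_add, zero_mul, zero_sub] at h1
        linarith [h1]
      exact quad_neg hq (hQ0 _)
    have hk : 0 < k := by have := (hprop 0).2.2; linarith
    have hW0 : ∀ nn, W nn = 0 := by
      intro nn
      have hQt : ∀ t : ℝ,
          0 ≤ a nn * (t * t) + (2 * W nn) * t + c nn := by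
        intro t
        have hE := Q_expand hB.1 (e0 (v nn)) (e1 (u nn)) t
        have hcr : e1 (u nn) ⬝ᵥ B.mulVec (e0 (v nn)) = W nn := by
          rw [hWdef]; simp only; exact bsym hB.1 _ _
        rw [hcr] at hE
        have h0 := hQ0 (e0 (v nn) + t • e1 (u nn))
        rw [hE] at h0
        calc (0:ℝ) ≤ (e1 (u nn) ⬝ᵥ B.mulVec (e1 (u nn))) * t ^ 2 + 2 * W nn * t
            + e0 (v nn) ⬝ᵥ B.mulVec (e0 (v nn)) := h0
          _ = a nn * (t * t) + (2 * W nn) * t + c nn := by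
              rw [hadef, hcdef]; simp only; ring
      have hd := discrim_le_zero hQt
      rw [discrim] at hd
      have hc0 : c nn = 0 := (hprop (v nn)).1
      have hW2 : (W nn) ^ 2 ≤ 0 := by rw [hc0] at hd; nlinarith [hd]
      have := sq_nonneg (W nn)
      have hWz : (W nn) ^ 2 = 0 := le_antisymm hW2 this
      exact sq_eq_zero_iff.mp hWz
    have hconst : ∀ nn, a nn + 2 * β nn = k := by
      intro nn
      have h1 := hfeas nn
      have h2 : G nn = -k := by
        rw [hGdef]
        simp only [hgdef]
        have h3 := (hprop (v nn)).1
        have h4 := (hprop (v nn)).2.1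
        linarith [h3, h4]
      rw [h2, hW0 nn] at h1
      linarith
    have hlim : Tendsto (fun nn => a nn + 2 * β nn) atTop (nhds 0) := by
      simpa using ha.add (hβ.const_mul 2)
    have hlim2 : Tendsto (fun nn => a nn + 2 * β nn) atTop (nhds k) := by
      have hfun : (fun nn => a nn + 2 * β nn) = fun _ => k := funext hconst
      rw [hfun]
      exact tendsto_const_nhds
    have hk0 : (0:ℝ) = k := tendsto_nhds_unique hlim hlim2
    linarith

end Stmt11Aux

/-- A hyperbolic (indefinite) constraint is necessary for an essentially perfect
solution: if `B` is positive or negative semidefinite, `X = {xᵀBx + 2bᵀx − k = 0}`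
is nonempty, and `inf{‖x₁‖² : x ∈ X} = 0`, then the infimum is attained, i.e. there
is a feasible `x` with `x₁ = 0`. -/
theorem stmt11 {r m : ℕ} (hr : 1 ≤ r) (hm : 1 ≤ m)
    (B : Matrix (Fin r ⊕ Fin m) (Fin r ⊕ Fin m) ℝ)
    (hB : B.PosSemidef ∨ (-B).PosSemidef)
    (b : Fin r ⊕ Fin m → ℝ) (k : ℝ)
    (hX : {x : Fin r ⊕ Fin m → ℝ | x ⬝ᵥ B.mulVec x + 2 * (b ⬝ᵥ x) - k = 0}.Nonempty)
    (hinf : sInf ((fun x => (x ∘ Sum.inl) ⬝ᵥ (x ∘ Sum.inl)) ''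
        {x : Fin r ⊕ Fin m → ℝ | x ⬝ᵥ B.mulVec x + 2 * (b ⬝ᵥ x) - k = 0}) = 0) :
    ∃ x ∈ {x : Fin r ⊕ Fin m → ℝ | x ⬝ᵥ B.mulVec x + 2 * (b ⬝ᵥ x) - k = 0},
      x ∘ Sum.inl = 0 := by
  rcases hB with hB | hB
  · exact Stmt11Aux.key B hB b k hX hinf
  · have hset : {x : Fin r ⊕ Fin m → ℝ | x ⬝ᵥ (-B).mulVec x + 2 * ((-b) ⬝ᵥ x) - (-k) = 0}
        = {x : Fin r ⊕ Fin m → ℝ | x ⬝ᵥ B.mulVec x + 2 * (b ⬝ᵥ x) - k = 0} := by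
      ext x
      simp only [Set.mem_setOf_eq, neg_mulVec, dotProduct_neg, neg_dotProduct]
      constructor <;> intro h <;> linarith
    rw [← hset] at hX hinf ⊢
    exact Stmt11Aux.key (-B) hB (-b) (-k) hX hinf
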